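/- Let G be a directed weighted graph (possibly with negative weights but no negative-weight cycles), let V' ⊆ V, and suppose event 𝒜': every canonical shortest path in G with at least Γ hops contains vertices of V' spaced at most Γ hops apart (including endpoints when they are in V'). Define a virtual digraph G' on V' with an arc ⟨u',v'⟩ of weight d_G^{(Γ)}(u',v') whenever v' is reachable from u' via a Γ-hop-limited path. Then for all u',v' ∈ V': d_{G'}(u',v') = d_G(u',v'). -/

import Mathlib

namespace Stmt15

variable {V : Type*}

/-- Endpoint of a walk starting at `u` with subsequent vertices given by the list. -/
def last : V → List V → V
  | u, [] => u
  | _, x :: xs => last x xs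

/-- Weight of a directed walk starting at `u` (non-arcs have weight `⊤`). -/
noncomputable def cost (w : V → V → EReal) : V → List V → EReal
  | _, [] => 0
  | u, x :: xs => w u x + cost w x xs

/-- `h`-hop-limited distance from `u` to `v`. -/
noncomputable def hdist (w : V → V → EReal) (h : ℕ) (u v : V) : EReal :=
  ⨅ p ∈ {p : List V | p.length ≤ h ∧ last u p = v}, cost w u p

/-- Shortest-path distance from `u` to `v`. -/
noncomputable def dist (w : V → V → EReal) (u v : V) : EReal :=
  ⨅ h : ℕ, hdist w h u v

lemma last_append (u : V) (p q : List V) : last u (p ++ q) = last (last u p) q := by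
  induction p generalizing u with
  | nil => rfl
  | cons x xs ih => simpa [last] using ih x

lemma cost_append (w : V → V → EReal) (u : V) (p q : List V) :
    cost w u (p ++ q) = cost w u p + cost w (last u p) q := by
  induction p generalizing u with
  | nil => simp [cost, last]
  | cons x xs ih => simp [cost, last, ih x, add_assoc]

lemma cost_ne_bot (w : V → V → EReal) (hnb : ∀ u v, w u v ≠ ⊥) (u : V) (p : List V) :
    cost w u p ≠ ⊥ := by
  induction p generalizing u with
  | nil => simp [cost]
  | cons x xs ih =>
    simp only [cost, ne_eq, EReal.add_eq_bot_iff]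
    exact fun h => h.elim (hnb u x) (ih x)

lemma hdist_le_cost (w : V → V → EReal) (h : ℕ) (u v : V) (p : List V)
    (hlen : p.length ≤ h) (hlast : last u p = v) : hdist w h u v ≤ cost w u p :=
  iInf₂_le p ⟨hlen, hlast⟩

lemma dist_le_hdist (w : V → V → EReal) (h : ℕ) (u v : V) : dist w u v ≤ hdist w h u v :=
  iInf_le _ h

lemma dist_le_cost (w : V → V → EReal) (u v : V) (p : List V)
    (hlast : last u p = v) : dist w u v ≤ cost w u p :=
  (dist_le_hdist w p.length u v).trans (hdist_le_cost w _ u v p le_rfl hlast)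

lemma last_take (u : V) (p : List V) (a : ℕ) (ha : a ≤ p.length) :
    last u (p.take a) = (u :: p).getD a u := by
  induction p generalizing u a with
  | nil =>
    cases Nat.le_zero.mp ha
    rfl
  | cons x xs ih =>
    cases a with
    | zero => rfl
    | succ n =>
      have hn : n ≤ xs.length := by simpa using ha
      have := ih x n hn
      rw [List.take_succ_cons]
      show last x (xs.take n) = _
      rw [this]
      rcases lt_or_eq_of_le hn with h | h
      · rw [List.getD_cons_succ, List.getD_eq_getElem _ _ (by simp; omega),
          List.getD_eq_getElem _ _ (by simp; omega)]
      · subst h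
        simp [List.getD]

/-- Direction 1 workhorse. -/
lemma dist_le_aux (w w' : V → V → EReal)
    (hcb : ∀ u p, cost w u p ≠ ⊥) (hcb' : ∀ u p, cost w' u p ≠ ⊥)
    (hrel : ∀ u v, w' u v ≠ ⊤ → ∃ p, last u p = v ∧ cost w u p = w' u v) :
    ∀ (xs : List V) (u x : V) (p₁ : List V), last u p₁ = x →
      dist w u (last x xs) ≤ cost w u p₁ + cost w' x xs := by
  intro xs
  induction xs with
  | nil =>
    intro u x p₁ h
    simpa [cost, last] using dist_le_cost w u x p₁ h
  | cons y ys ih =>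
    intro u x p₁ h
    show dist w u (last y ys) ≤ cost w u p₁ + (w' x y + cost w' y ys)
    by_cases htop : w' x y = ⊤
    · rw [htop, EReal.top_add_of_ne_bot (hcb' y ys), EReal.add_top_of_ne_bot (hcb u p₁)]
      exact le_top
    · obtain ⟨p₂, hl2, hc2⟩ := hrel x y htop
      have key : cost w u (p₁ ++ p₂) = cost w u p₁ + w' x y := by
        rw [cost_append, h, hc2]
      have hlast : last u (p₁ ++ p₂) = y := by rw [last_append, h, hl2]
      calc dist w u (last y ys) ≤ cost w u (p₁ ++ p₂) + cost w' y ys := ih u y (p₁ ++ p₂) hlast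
        _ = cost w u p₁ + (w' x y + cost w' y ys) := by rw [key, add_assoc]



lemma chain_le_getLast (Γ : ℕ) :
    ∀ (js : List ℕ) (L : ℕ), js.Chain' (fun a b => a < b ∧ b - a ≤ Γ) →
      js.getLast? = some L → ∀ j ∈ js, j ≤ L := by
  intro js
  induction js with
  | nil => simp
  | cons a rest ih =>
    intro L hch hgl j hj
    cases rest with
    | nil =>
      simp only [List.getLast?_singleton, Option.some.injEq] at hgl
      simp only [List.mem_singleton] at hj
      omega
    | cons b rest' =>
      have hab : a < b := (List.isChain_cons_cons.mp hch).1.1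
      have hch' := (List.isChain_cons_cons.mp hch).2
      rw [List.getLast?_cons_cons] at hgl
      have hb := ih L hch' hgl
      rcases List.mem_cons.mp hj with rfl | hj'
      · exact le_of_lt (lt_of_lt_of_le hab (hb b List.mem_cons_self))
      · exact hb j hj'

lemma chain_cost (w w' : V → V → EReal) (V' : Finset V) (Γ : ℕ)
    (hw'le : ∀ u v, u ∈ V' → v ∈ V' → w' u v ≤ hdist w Γ u v)
    (p : List V) (u' : V) :
    ∀ (rest : List ℕ) (a : ℕ),
      (a :: rest).Chain' (fun x y => x < y ∧ y - x ≤ Γ) →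
      (∀ j ∈ a :: rest, j ≤ p.length) →
      (a :: rest).getLast? = some p.length →
      (∀ j ∈ a :: rest, (u' :: p).getD j u' ∈ V') →
      cost w' ((u' :: p).getD a u') (rest.map (fun j => (u' :: p).getD j u'))
          ≤ cost w ((u' :: p).getD a u') (p.drop a) ∧
      last ((u' :: p).getD a u') (rest.map (fun j => (u' :: p).getD j u'))
          = (u' :: p).getD p.length u' := by
  intro rest
  induction rest with
  | nil =>
    intro a _ _ hgl _
    have ha : a = p.length := by simpa using hgl
    subst ha
    constructor
    · simp [cost, List.drop_length]
    · rfl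
  | cons b rest' ih =>
    intro a hch hle hgl hmem
    have hab : a < b ∧ b - a ≤ Γ := (List.isChain_cons_cons.mp hch).1
    have hch' := (List.isChain_cons_cons.mp hch).2
    have hbL : b ≤ p.length := hle b (by simp)
    have haL : a ≤ p.length := le_trans (le_of_lt hab.1) hbL
    set vtx : ℕ → V := fun j => (u' :: p).getD j u' with hvtx
    set seg : List V := (p.drop a).take (b - a) with hsegdef
    have hseg1 : p.take a ++ seg = p.take b := by
      rw [hsegdef, ← List.take_add]
      congr 1
      omega
    have hseg2 : seg ++ p.drop b = p.drop a := by
      have h1 := List.take_append_drop (b - a) (p.drop a)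
      rwa [List.drop_drop, show a + (b - a) = b by omega] at h1
    have hlastseg : last (vtx a) seg = vtx b := by
      have h1 : last u' (p.take b) = vtx b := last_take u' p b hbL
      rw [← hseg1, last_append, last_take u' p a haL] at h1
      exact h1
    have hseglen : seg.length ≤ Γ := by
      rw [hsegdef, List.length_take]
      omega
    have harc : w' (vtx a) (vtx b) ≤ cost w (vtx a) seg :=
      (hw'le _ _ (hmem a (by simp)) (hmem b (by simp))).trans
        (hdist_le_cost w Γ _ _ seg hseglen hlastseg)
    have hsplit : cost w (vtx a) (p.drop a) = cost w (vtx a) seg + cost w (vtx b) (p.drop b) := by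
      rw [← hseg2, cost_append, hlastseg]
    have hgl' : (b :: rest').getLast? = some p.length := by
      rw [← List.getLast?_cons_cons (b := b) (l := rest') (a := a)]
      exact hgl
    obtain ⟨ih1, ih2⟩ := ih b hch' (fun j hj => hle j (List.mem_cons_of_mem _ hj)) hgl'
      (fun j hj => hmem j (List.mem_cons_of_mem _ hj))
    constructor
    · show w' (vtx a) (vtx b) + cost w' (vtx b) (rest'.map vtx) ≤ _
      rw [hsplit]
      exact add_le_add harc ih1
    · show last (vtx b) (rest'.map vtx) = vtx p.length
      exact ih2



/-- In a directed weighted graph (possibly with negative weights but no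
negative-weight cycles), if every canonical hop-limited shortest path between
sampled vertices has sampled vertices spaced at most `Γ` hops apart, then distances
in the virtual digraph `G'` on the sampled set (whose arcs are weighted by
`Γ`-hop-limited distances in `G`) coincide with distances in `G`. -/
theorem virtual_digraph_distances [Fintype V] [DecidableEq V]
    (w : V → V → EReal) (hnb : ∀ u v, w u v ≠ ⊥)
    (hnocycle : ∀ (v : V) (p : List V), p ≠ [] → last v p = v → 0 ≤ cost w v p)
    (V' : Finset V) (Γ : ℕ) (hΓ : 1 ≤ Γ)
    (P : ℕ → V → V → List V)
    (hP : ∀ i u v, hdist w i u v ≠ ⊤ → (P i u v).length ≤ i ∧ last u (P i u v) = v ∧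
      cost w u (P i u v) = hdist w i u v)
    (hA : ∀ i (u v : V), u ∈ V' → v ∈ V' → hdist w i u v ≠ ⊤ →
      ∃ js : List ℕ, js.Chain' (fun a b => a < b ∧ b - a ≤ Γ) ∧
        js.head? = some 0 ∧ js.getLast? = some (P i u v).length ∧
        ∀ j ∈ js, ((u :: P i u v).getD j u) ∈ V')
    (w' : V → V → EReal)
    (hw' : ∀ u v, w' u v = if u ∈ V' ∧ v ∈ V' then hdist w Γ u v else ⊤) :
    ∀ u' ∈ V', ∀ v' ∈ V', dist w' u' v' = dist w u' v' := by
  intro u' hu' v' hv'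
  have hcb : ∀ u p, cost w u p ≠ ⊥ := cost_ne_bot w hnb
  have hw'bot : ∀ u v, w' u v ≠ ⊥ := by
    intro u v
    rw [hw']
    split
    · intro hb
      have hnt : hdist w Γ u v ≠ ⊤ := by rw [hb]; exact fun h => absurd h.symm bot_ne_top.symm
      obtain ⟨_, _, hc⟩ := hP Γ u v hnt
      exact hcb u _ (hc.trans hb)
    · exact top_ne_bot
  have hcb' : ∀ u p, cost w' u p ≠ ⊥ := cost_ne_bot w' hw'bot
  have hrel : ∀ u v, w' u v ≠ ⊤ → ∃ p, last u p = v ∧ cost w u p = w' u v := by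
    intro u v h
    rw [hw'] at h ⊢
    split at h
    · rw [if_pos ‹u ∈ V' ∧ v ∈ V'›]
      obtain ⟨_, h2, h3⟩ := hP Γ u v h
      exact ⟨P Γ u v, h2, h3⟩
    · exact absurd rfl h
  apply le_antisymm
  · -- dist w' u' v' ≤ dist w u' v'
    refine le_iInf fun i => ?_
    by_cases hT : hdist w i u' v' = ⊤
    · rw [hT]; exact le_top
    obtain ⟨hlen, hlastP, hcost⟩ := hP i u' v' hT
    obtain ⟨js, hch, hhd, hgl, hmem⟩ := hA i u' v' hu' hv' hT
    obtain ⟨a, rest, rfl⟩ : ∃ a rest, js = a :: rest := by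
      cases js with
      | nil => simp at hhd
      | cons a rest => exact ⟨a, rest, rfl⟩
    have ha0 : a = 0 := by simpa using hhd
    subst ha0
    have hleL : ∀ j ∈ (0 :: rest), j ≤ (P i u' v').length :=
      chain_le_getLast Γ _ _ hch hgl
    have hw'le : ∀ u v, u ∈ V' → v ∈ V' → w' u v ≤ hdist w Γ u v := by
      intro u v h1 h2
      rw [hw', if_pos ⟨h1, h2⟩]
    obtain ⟨hc, hl⟩ := chain_cost w w' V' Γ hw'le (P i u' v') u' rest 0 hch hleL hgl hmem
    have h0 : (u' :: P i u' v').getD 0 u' = u' := rfl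
    have hvL : (u' :: P i u' v').getD (P i u' v').length u' = v' := by
      rw [← last_take u' (P i u' v') (P i u' v').length le_rfl, List.take_length, hlastP]
    rw [h0] at hc hl
    rw [hvL] at hl
    calc dist w' u' v'
        ≤ cost w' u' (rest.map (fun j => (u' :: P i u' v').getD j u')) :=
          dist_le_cost _ _ _ _ hl
      _ ≤ cost w u' (P i u' v') := by simpa using hc
      _ = hdist w i u' v' := hcost
  · -- dist w u' v' ≤ dist w' u' v'
    refine le_iInf fun h => le_iInf₂ fun q hq => ?_
    have := dist_le_aux w w' hcb hcb' hrel q u' u' [] rfl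
    rw [hq.2] at this
    simpa [cost] using this


end Stmt15
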